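/- (Lemma 4 of the Supplementary Material: convolution powers overlap with their unit shift.) Let p : ℤ → ℝ be a probability mass function (p(n) ≥ 0, Σ_n p(n) = 1) with finite support containing at least two points, let n₀ be the minimum of the support of p, and assume gcd{n − n₀ : p(n) > 0} = 1. Then there exists a positive integer L such that the L-fold convolution p^{*L} (the distribution of the sum of L independent random variables each distributed according to p) satisfies (1/2)·Σ_{n∈ℤ} |p^{*L}(n) − p^{*L}(n+1)| < 1; indeed there is an integer K with p^{*L}(K) > 0 and p^{*L}(K−1) > 0. -/

import Mathlib

open Matrix Complex Filter Kronecker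
open scoped ComplexOrder

noncomputable section

/-- n-fold Kronecker power of a matrix, indexed by functions `Fin n → Fin d`. -/
def kronPow {d : ℕ} (X : Matrix (Fin d) (Fin d) ℂ) (n : ℕ) :
    Matrix (Fin n → Fin d) (Fin n → Fin d) ℂ :=
  Matrix.of fun i j => ∏ k, X (i k) (j k)

/-- The `n`-copy (non-interacting) Hamiltonian `Σᵢ I^{⊗(i-1)} ⊗ H ⊗ I^{⊗(n-i)}`. -/
def nCopyHam {d : ℕ} (H : Matrix (Fin d) (Fin d) ℂ) (n : ℕ) :
    Matrix (Fin n → Fin d) (Fin n → Fin d) ℂ :=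
  ∑ k : Fin n, Matrix.of fun i j =>
    H (i k) (j k) * ∏ l ∈ Finset.univ.erase k, (if i l = j l then (1 : ℂ) else 0)

/-- Time evolution unitary `e^{-iHt}`. -/
def timeEvol {m : Type*} [Fintype m] [DecidableEq m] (H : Matrix m m ℂ) (t : ℝ) :
    Matrix m m ℂ :=
  NormedSpace.exp ((-(Complex.I * (t : ℂ))) • H)

/-- Trace norm `‖A‖₁ = Tr √(AᴴA)`. -/
def traceNorm {m : Type*} [Fintype m] [DecidableEq m] (A : Matrix m m ℂ) : ℝ :=
  (((Matrix.posSemidef_conjTranspose_mul_self A).1.eigenvectorUnitary.1 *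
      diagonal ((fun x : ℝ => (x : ℂ)) ∘ Real.sqrt ∘ (Matrix.posSemidef_conjTranspose_mul_self A).1.eigenvalues) *
      (star (Matrix.posSemidef_conjTranspose_mul_self A).1.eigenvectorUnitary : Matrix m m ℂ)).trace).re

/-- A quantum channel: a map admitting a Kraus representation. -/
def IsQuantumChannel {m n : Type*} [Fintype m] [DecidableEq m] [Fintype n] [DecidableEq n]
    (E : Matrix m m ℂ → Matrix n n ℂ) : Prop :=
  ∃ (K : ℕ) (A : Fin K → Matrix n m ℂ),
    (∀ X, E X = ∑ k, A k * X * (A k)ᴴ) ∧ (∑ k, (A k)ᴴ * A k = 1)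

/-- Time-translation invariance of a map w.r.t. input/output Hamiltonians. -/
def IsTI {m n : Type*} [Fintype m] [DecidableEq m] [Fintype n] [DecidableEq n]
    (Hin : Matrix m m ℂ) (Hout : Matrix n n ℂ)
    (E : Matrix m m ℂ → Matrix n n ℂ) : Prop :=
  ∀ (t : ℝ) (X : Matrix m m ℂ),
    timeEvol Hout t * E X * timeEvol Hout (-t) =
      E (timeEvol Hin t * X * timeEvol Hin (-t))

/-- Energy variance of a (unit) vector. -/
def varVec {m : Type*} [Fintype m] (H : Matrix m m ℂ) (ψ : m → ℂ) : ℝ :=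
  (star ψ ⬝ᵥ ((H * H) *ᵥ ψ)).re - ((star ψ ⬝ᵥ (H *ᵥ ψ)).re) ^ 2

/-- The quantum Fisher information formula for a given spectral decomposition data. -/
def qfiOf {m : Type*} [Fintype m] (H : Matrix m m ℂ) (p : m → ℝ) (φ : m → m → ℂ) : ℝ :=
  2 * ∑ j, ∑ k,
    if 0 < p j + p k then
      (p j - p k) ^ 2 / (p j + p k) * Complex.normSq (star (φ j) ⬝ᵥ (H *ᵥ φ k))
    else 0

/-- Quantum Fisher information of a Hermitian (e.g. density) matrix `ρ` w.r.t. `H`. -/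
def QFI {m : Type*} [Fintype m] [DecidableEq m] {ρ : Matrix m m ℂ}
    (hρ : ρ.IsHermitian) (H : Matrix m m ℂ) : ℝ :=
  qfiOf H hρ.eigenvalues (fun j i => hρ.eigenvectorBasis j i)

open scoped Classical in
/-- Total positive-semidefinite square root (zero on non-PSD inputs). -/
def msqrt {m : Type*} [Fintype m] [DecidableEq m] (A : Matrix m m ℂ) : Matrix m m ℂ :=
  if h : A.PosSemidef then
    h.1.eigenvectorUnitary.1 * diagonal ((fun x : ℝ => (x : ℂ)) ∘ Real.sqrt ∘ h.1.eigenvalues) *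
      (star h.1.eigenvectorUnitary : Matrix m m ℂ)
  else 0

/-- Fidelity `Fid(ρ,σ) = (Tr √(√ρ σ √ρ))² = ‖√σ √ρ‖₁²`. -/
def fid {m : Type*} [Fintype m] [DecidableEq m] (ρ σ : Matrix m m ℂ) : ℝ :=
  (traceNorm (msqrt σ * msqrt ρ)) ^ 2

/-- Density matrix. -/
def IsDensityMatrix {m : Type*} [Fintype m] (ρ : Matrix m m ℂ) : Prop :=
  ρ.PosSemidef ∧ ρ.trace = 1


/-- Convolution of two probability mass functions on `ℤ`. -/
def conv (p q : ℤ → ℝ) : ℤ → ℝ := fun n => ∑' m : ℤ, p m * q (n - m)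

/-- `L`-fold convolution power of a probability mass function on `ℤ`. -/
def convPow (p : ℤ → ℝ) : ℕ → ℤ → ℝ
  | 0 => fun n => if n = 0 then 1 else 0
  | (L + 1) => conv p (convPow p L)

namespace ConvAux

lemma summable_fin {ι : Type*} {f : ι → ℝ} (h : (Function.support f).Finite) : Summable f := by
  apply summable_of_ne_finset_zero (s := h.toFinset)
  intro b hb
  by_contra h'
  exact hb (h.mem_toFinset.2 h')

lemma support_conv {p q : ℤ → ℝ} (hp : (Function.support p).Finite)
    (hq : (Function.support q).Finite) : (Function.support (conv p q)).Finite := by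
  apply Set.Finite.subset ((hp.prod hq).image (fun x => x.1 + x.2))
  intro n hn
  rw [Function.mem_support] at hn
  by_contra hcon
  apply hn
  have hz : ∀ m : ℤ, p m * q (n - m) = 0 := by
    intro m
    by_contra hm
    have h1 : p m ≠ 0 := fun h => hm (by simp [h])
    have h2 : q (n - m) ≠ 0 := fun h => hm (by simp [h])
    exact hcon ⟨(m, n - m), ⟨h1, h2⟩, by simp⟩
  simp only [conv, hz, tsum_zero]

lemma conv_nonneg {p q : ℤ → ℝ} (hp : ∀ n, 0 ≤ p n) (hq : ∀ n, 0 ≤ q n) (n : ℤ) :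
    0 ≤ conv p q n :=
  tsum_nonneg fun m => mul_nonneg (hp m) (hq _)

lemma conv_elim {p q : ℤ → ℝ} {n : ℤ} (h : conv p q n ≠ 0) :
    ∃ m, p m ≠ 0 ∧ q (n - m) ≠ 0 := by
  by_contra hcon
  push_neg at hcon
  apply h
  have hz : ∀ m : ℤ, p m * q (n - m) = 0 := by
    intro m
    rcases eq_or_ne (p m) 0 with h1 | h1
    · simp [h1]
    · simp [hcon m h1]
  simp only [conv, hz, tsum_zero]

lemma conv_pos {p q : ℤ → ℝ} (hp : ∀ n, 0 ≤ p n) (hq : ∀ n, 0 ≤ q n)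
    (hpf : (Function.support p).Finite) {a b : ℤ} (ha : 0 < p a) (hb : 0 < q b) :
    0 < conv p q (a + b) := by
  have hsum : Summable (fun m => p m * q (a + b - m)) := by
    apply summable_fin
    apply Set.Finite.subset hpf
    intro m hm
    rw [Function.mem_support] at hm ⊢
    exact fun h => hm (by simp [h])
  have := Summable.le_tsum hsum a (fun j _ => mul_nonneg (hp j) (hq _))
  have hab : a + b - a = b := by ring
  calc 0 < p a * q b := mul_pos ha hb
    _ = p a * q (a + b - a) := by rw [hab]
    _ ≤ conv p q (a + b) := this

lemma convPow_nonneg {p : ℤ → ℝ} (hp : ∀ n, 0 ≤ p n) : ∀ L n, 0 ≤ convPow p L n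
  | 0, n => by simp [convPow]; positivity
  | (L + 1), n => conv_nonneg hp (convPow_nonneg hp L) n

lemma convPow_fin {p : ℤ → ℝ} (hpf : (Function.support p).Finite) :
    ∀ L, (Function.support (convPow p L)).Finite
  | 0 => Set.Finite.subset (Set.finite_singleton 0) (by
      intro n hn
      rw [Function.mem_support] at hn
      simp only [convPow] at hn
      by_contra h
      exact hn (if_neg (by simpa using h)))
  | (L + 1) => support_conv hpf (convPow_fin hpf L)

lemma tsum_conv {p q : ℤ → ℝ} (hpf : (Function.support p).Finite)
    (hqf : (Function.support q).Finite) :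
    ∑' n, conv p q n = (∑' n, p n) * (∑' n, q n) := by
  have hF : Summable (Function.uncurry (fun n m : ℤ => p m * q (n - m))) := by
    apply summable_fin
    apply Set.Finite.subset ((hpf.prod hqf).image (fun x => (x.1 + x.2, x.1)))
    intro x hx
    rw [Function.mem_support] at hx
    have h1 : p x.2 ≠ 0 := fun h => hx (by simp [Function.uncurry, h])
    have h2 : q (x.1 - x.2) ≠ 0 := fun h => hx (by simp [Function.uncurry, h])
    exact ⟨(x.2, x.1 - x.2), ⟨h1, h2⟩, by simp⟩
  calc ∑' n, conv p q n = ∑' n, ∑' m, p m * q (n - m) := rfl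
    _ = ∑' m, ∑' n, p m * q (n - m) := (Summable.tsum_comm hF).symm
    _ = ∑' m, p m * ∑' n, q (n - m) := by
        refine tsum_congr fun m => ?_
        rw [tsum_mul_left]
    _ = ∑' m, p m * ∑' n, q n := by
        refine tsum_congr fun m => ?_
        congr 1
        exact (Equiv.subRight m).tsum_eq q
    _ = (∑' n, p n) * (∑' n, q n) := tsum_mul_right

lemma convPow_tsum {p : ℤ → ℝ} (hpf : (Function.support p).Finite)
    (hsum : ∑' n, p n = 1) : ∀ L, ∑' n, convPow p L n = 1
  | 0 => by simp [convPow]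
  | (L + 1) => by
      have := tsum_conv hpf (convPow_fin hpf L)
      rw [show convPow p (L+1) = conv p (convPow p L) from rfl, this, hsum,
        convPow_tsum hpf hsum L, one_mul]

lemma convPow_add_pos {p : ℤ → ℝ} (hp : ∀ n, 0 ≤ p n) (hpf : (Function.support p).Finite) :
    ∀ (L L' : ℕ) (a b : ℤ), 0 < convPow p L a → 0 < convPow p L' b →
      0 < convPow p (L + L') (a + b)
  | 0, L', a, b, ha, hb => by
      have ha0 : a = 0 := by
        by_contra h
        simp [convPow, if_neg h] at ha
      subst ha0
      rw [Nat.zero_add, zero_add]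
      exact hb
  | (L + 1), L', a, b, ha, hb => by
      obtain ⟨m, hm, hm'⟩ := conv_elim (ne_of_gt ha)
      have hmp : 0 < p m := lt_of_le_of_ne (hp m) (Ne.symm hm)
      have hmq : 0 < convPow p L (a - m) := lt_of_le_of_ne (convPow_nonneg hp L _) (Ne.symm hm')
      have IH := convPow_add_pos hp hpf L L' (a - m) b hmq hb
      have := conv_pos hp (convPow_nonneg hp (L + L')) hpf hmp IH
      have heq : m + (a - m + b) = a + b := by ring
      rw [heq] at this
      rw [show L + 1 + L' = (L + L') + 1 by omega]
      exact this

lemma convPow_diag {p : ℤ → ℝ} (hp : ∀ n, 0 ≤ p n) (hpf : (Function.support p).Finite)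
    {n₀ : ℤ} (hn₀ : 0 < p n₀) : ∀ k : ℕ, 0 < convPow p k (k * n₀)
  | 0 => by simp [convPow]
  | (k + 1) => by
      have h1 : 0 < convPow p 1 n₀ := by
        have h0 : 0 < convPow p 0 0 := by simp [convPow]
        have := conv_pos hp (convPow_nonneg hp 0) hpf hn₀ h0
        show 0 < conv p (convPow p 0) n₀
        simpa using this
      have := convPow_add_pos hp hpf k 1 (k * n₀) n₀ (convPow_diag hp hpf hn₀ k) h1
      have heq : (k : ℤ) * n₀ + n₀ = ((k : ℕ) + 1 : ℕ) * n₀ := by push_cast; ring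
      rw [heq] at this
      exact this

lemma tv_lt_one {q : ℤ → ℝ} (hq0 : ∀ n, 0 ≤ q n) (hqfin : (Function.support q).Finite)
    (hqsum : ∑' n, q n = 1) {K : ℤ} (hK : 0 < q K) (hK1 : 0 < q (K - 1)) :
    (1 / 2) * ∑' n : ℤ, |q n - q (n + 1)| < 1 := by
  set f : ℤ → ℝ := fun n => q n + q (n + 1) - |q n - q (n + 1)| with hf
  have hf0 : ∀ n, 0 ≤ f n := by
    intro n
    have h1 : |q n - q (n + 1)| ≤ |q n| + |q (n + 1)| := abs_sub _ _
    rw [_root_.abs_of_nonneg (hq0 n), _root_.abs_of_nonneg (hq0 (n + 1))] at h1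
    simp only [hf]
    linarith
  have hq : Summable q := summable_fin hqfin
  have hqsh : Summable (fun n : ℤ => q (n + 1)) :=
    hq.comp_injective (add_left_injective (1 : ℤ))
  have habs : Summable (fun n : ℤ => |q n - q (n + 1)|) := (hq.sub hqsh).abs
  have hfs : Summable f := (hq.add hqsh).sub habs
  have hshift : ∑' n : ℤ, q (n + 1) = 1 := by
    rw [← hqsum]
    simpa using (Equiv.addRight (1 : ℤ)).tsum_eq q
  have htf : ∑' n, f n = 2 - ∑' n : ℤ, |q n - q (n + 1)| := by
    simp only [hf]
    rw [Summable.tsum_sub (hq.add hqsh) habs, Summable.tsum_add hq hqsh, hqsum, hshift]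
    ring
  have hlow : f (K - 1) ≤ ∑' n, f n := Summable.le_tsum hfs _ (fun j _ => hf0 j)
  have hfK : 0 < f (K - 1) := by
    have hKK : K - 1 + 1 = K := by ring
    have h2 : |q (K - 1) - q K| < q (K - 1) + q K := by
      rw [abs_sub_lt_iff]
      constructor <;> linarith
    simp only [hf, hKK]
    linarith
  linarith [htf ▸ hlow]

end ConvAux

open ConvAux in
theorem convolution_power_overlaps_unit_shift
    (p : ℤ → ℝ) (hp : ∀ n, 0 ≤ p n)
    (hfin : (Function.support p).Finite)
    (hsum : ∑' n : ℤ, p n = 1)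
    (n₀ : ℤ) (hn₀ : 0 < p n₀) (hmin : ∀ n, 0 < p n → n₀ ≤ n)
    (htwo : ∃ n, n ≠ n₀ ∧ 0 < p n)
    (hgcd : ∀ e : ℕ, (∀ n, 0 < p n → (e : ℤ) ∣ (n - n₀)) → e = 1) :
    ∃ L : ℕ, 0 < L ∧
      (1 / 2) * ∑' n : ℤ, |convPow p L n - convPow p L (n + 1)| < 1 ∧
      ∃ K : ℤ, 0 < convPow p L K ∧ 0 < convPow p L (K - 1) := by
  classical
  set T : Set ℤ := {x | ∃ n, 0 < p n ∧ n - n₀ = x} with hT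
  -- Step 1 : 1 ∈ closure T
  have hone : (1 : ℤ) ∈ AddSubgroup.closure T := by
    obtain ⟨g, hg⟩ := Int.subgroup_cyclic (AddSubgroup.closure T)
    have hdvd : ∀ n, 0 < p n → (g.natAbs : ℤ) ∣ (n - n₀) := by
      intro n hn
      have hmem : (n - n₀) ∈ AddSubgroup.closure T :=
        AddSubgroup.subset_closure ⟨n, hn, rfl⟩
      rw [hg, AddSubgroup.mem_closure_singleton] at hmem
      obtain ⟨k, hk⟩ := hmem
      rw [Int.natAbs_dvd]
      exact ⟨k, by rw [← hk, zsmul_eq_mul, mul_comm]; norm_cast⟩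
    have hg1 := hgcd g.natAbs hdvd
    have hgg : g = 1 ∨ g = -1 := Int.natAbs_eq_iff.mp (by exact_mod_cast hg1)
    rw [hg, AddSubgroup.mem_closure_singleton]
    rcases hgg with h | h
    · exact ⟨1, by simp [h]⟩
    · exact ⟨-1, by simp [h]⟩
  -- Step 2 : difference representation
  have hdiff : ∀ x ∈ AddSubgroup.closure T,
      ∃ a b : ℤ, a ∈ AddSubmonoid.closure T ∧ b ∈ AddSubmonoid.closure T ∧ x = a - b := by
    intro x hx
    induction hx using AddSubgroup.closure_induction with
    | mem y hy => exact ⟨y, 0, AddSubmonoid.subset_closure hy, zero_mem _, by ring⟩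
    | zero => exact ⟨0, 0, zero_mem _, zero_mem _, by ring⟩
    | add y z hy hz ihy ihz =>
      obtain ⟨a, b, ha, hb, hab⟩ := ihy
      obtain ⟨a', b', ha', hb', hab'⟩ := ihz
      exact ⟨a + a', b + b', add_mem ha ha', add_mem hb hb', by omega⟩
    | neg y hy ih =>
      obtain ⟨a, b, ha, hb, hab⟩ := ih
      exact ⟨b, a, hb, ha, by omega⟩
  -- Step 3 : monoid elements give positive convolution powers
  have hmono : ∀ x ∈ AddSubmonoid.closure T, ∃ L : ℕ, 0 < convPow p L (x + L * n₀) := by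
    intro x hx
    induction hx using AddSubmonoid.closure_induction with
    | mem y hy =>
      obtain ⟨n, hn, hny⟩ := hy
      refine ⟨1, ?_⟩
      have h1 : 0 < convPow p 1 n := by
        have h0 : 0 < convPow p 0 0 := by simp [convPow]
        have := conv_pos hp (convPow_nonneg hp 0) hfin hn h0
        show 0 < conv p (convPow p 0) n
        simpa using this
      have : y + (1 : ℕ) * n₀ = n := by push_cast; omega
      rw [this]
      exact h1
    | zero => exact ⟨0, by simp [convPow]⟩
    | add y z hy hz ihy ihz =>
      obtain ⟨La, ha⟩ := ihy
      obtain ⟨Lb, hb⟩ := ihz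
      refine ⟨La + Lb, ?_⟩
      have := convPow_add_pos hp hfin La Lb _ _ ha hb
      have heq : y + La * n₀ + (z + Lb * n₀) = y + z + (La + Lb : ℕ) * n₀ := by
        push_cast; ring
      rw [heq] at this
      exact this
  -- Step 4: padding
  have hpad : ∀ (L k : ℕ) (x : ℤ), 0 < convPow p L x → 0 < convPow p (L + k) (x + k * n₀) := by
    intro L k x hx
    exact convPow_add_pos hp hfin L k x _ hx (convPow_diag hp hfin hn₀ k)
  -- combine
  obtain ⟨a, b, haM, hbM, hab⟩ := hdiff 1 hone
  obtain ⟨La, ha⟩ := hmono a haM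
  obtain ⟨Lb, hb⟩ := hmono b hbM
  set L : ℕ := La + Lb + 1 with hL
  have hLa : 0 < convPow p L (a + L * n₀) := by
    have := hpad La (Lb + 1) _ ha
    have heq : a + La * n₀ + (Lb + 1 : ℕ) * n₀ = a + (L : ℕ) * n₀ := by
      rw [hL]; push_cast; ring
    have heq2 : La + (Lb + 1) = L := by omega
    rw [heq, heq2] at this
    exact this
  have hLb : 0 < convPow p L (b + L * n₀) := by
    have := hpad Lb (La + 1) _ hb
    have heq : b + Lb * n₀ + (La + 1 : ℕ) * n₀ = b + (L : ℕ) * n₀ := by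
      rw [hL]; push_cast; ring
    have heq2 : Lb + (La + 1) = L := by omega
    rw [heq, heq2] at this
    exact this
  refine ⟨L, by omega, ?_, ⟨a + L * n₀, hLa, ?_⟩⟩
  · exact tv_lt_one (convPow_nonneg hp L) (convPow_fin hfin L)
      (convPow_tsum hfin hsum L) hLa (by rw [show a + L * n₀ - 1 = b + L * n₀ by omega]; exact hLb)
  · rw [show a + L * n₀ - 1 = b + L * n₀ by omega]
    exact hLb


end
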